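/- For any fixed m ≥ 2, the m-ary partition function satisfies b_m(n+1)/b_m(n) → 1 as n → ∞. -/

import Mathlib

open Filter Real

def A (m n : ℕ) : Set (Multiset ℕ) := {S | (∀ k ∈ S, ∃ a : ℕ, k = m ^ a) ∧ S.sum = n}

lemma finA (m n : ℕ) (hm : 2 ≤ m) : (A m n).Finite := by
  have : Finite ↥(A m n) := by
    have pos : ∀ (S : ↥(A m n)), ∀ i ∈ S.1, 0 < i := by
      intro S i hi
      obtain ⟨a, rfl⟩ := S.2.1 i hi
      exact pow_pos (by omega) a
    apply Finite.of_injective (fun S => (⟨S.1, fun {i} hi => pos S i hi, S.2.2⟩ : Nat.Partition n))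
    intro a b h
    exact Subtype.ext (congrArg Nat.Partition.parts h)
  exact Set.finite_coe_iff.mp this

lemma A_zero (m : ℕ) (hm : 2 ≤ m) : (A m 0).ncard = 1 := by
  have : A m 0 = {0} := by
    ext S
    simp only [A, Set.mem_setOf_eq, Set.mem_singleton_iff]
    constructor
    · rintro ⟨h1, h2⟩
      rw [Multiset.eq_zero_iff_forall_notMem]
      intro a ha
      obtain ⟨b, rfl⟩ := h1 a ha
      have := Multiset.sum_eq_zero_iff.mp h2 _ ha
      have : 0 < m ^ b := pow_pos (by omega) b
      omega
    · rintro rfl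
      exact ⟨by simp, by simp⟩
  rw [this, Set.ncard_singleton]

lemma Arec (m n : ℕ) (hm : 2 ≤ m) :
    (A m (n+1)).ncard = (A m n).ncard
      + if m ∣ (n+1) then (A m ((n+1)/m)).ncard else 0 := by
  have hm0 : m ≠ 0 := by omega
  set S1 : Set (Multiset ℕ) := A m (n+1) ∩ {S | (1:ℕ) ∈ S} with hS1def
  set S2 : Set (Multiset ℕ) := A m (n+1) ∩ {S | (1:ℕ) ∉ S} with hS2def
  have hsplit : A m (n+1) = S1 ∪ S2 := by
    ext S; by_cases h : (1:ℕ) ∈ S <;> simp [hS1def, hS2def, h]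
  have hdisj : Disjoint S1 S2 := by
    rw [Set.disjoint_iff_inter_eq_empty]
    ext S; by_cases h : (1:ℕ) ∈ S <;> simp [hS1def, hS2def, h]
  have hfin1 : S1.Finite := (finA m (n+1) hm).subset Set.inter_subset_left
  have hfin2 : S2.Finite := (finA m (n+1) hm).subset Set.inter_subset_left
  have hS1 : S1 = (fun S => (1:ℕ) ::ₘ S) '' A m n := by
    ext S
    constructor
    · rintro ⟨⟨hpow, hsum⟩, hmem⟩
      refine ⟨S.erase 1, ⟨fun k hk => hpow k (Multiset.mem_of_mem_erase hk), ?_⟩,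
        Multiset.cons_erase hmem⟩
      have hce := Multiset.cons_erase hmem
      have h2 : ((1:ℕ) ::ₘ S.erase 1).sum = n + 1 := by rw [hce]; exact hsum
      rw [Multiset.sum_cons] at h2
      omega
    · rintro ⟨T, ⟨hpow, hsum⟩, rfl⟩
      refine ⟨⟨?_, ?_⟩, Multiset.mem_cons_self 1 T⟩
      · intro k hk
        rcases Multiset.mem_cons.mp hk with rfl | hk
        · exact ⟨0, by simp⟩
        · exact hpow k hk
      · rw [Multiset.sum_cons, hsum]; omega
  have hcard1 : S1.ncard = (A m n).ncard := by
    rw [hS1]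
    exact Set.ncard_image_of_injective _ (fun a b h => by
      simpa using (Multiset.cons_inj_right (1:ℕ)).mp h)
  -- elements of S2-members are divisible by m
  have hdvd : ∀ S : Multiset ℕ, S ∈ S2 → ∀ k ∈ S, m ∣ k := by
    rintro S ⟨⟨hpow, hsum⟩, hno1⟩ k hk
    obtain ⟨a, rfl⟩ := hpow k hk
    rcases Nat.eq_zero_or_pos a with rfl | ha
    · simp at hk; exact absurd hk hno1
    · exact dvd_pow_self m (by omega)
  have hcard2 : S2.ncard = if m ∣ (n+1) then (A m ((n+1)/m)).ncard else 0 := by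
    by_cases hd : m ∣ (n+1)
    · rw [if_pos hd]
      obtain ⟨q, hq⟩ := hd
      have hq2 : (n+1)/m = q := by rw [hq]; exact Nat.mul_div_cancel_left q (by omega)
      have hmapsum : ∀ T : Multiset ℕ, (T.map (fun x => m * x)).sum = m * T.sum := by
        intro T
        induction T using Multiset.induction with
        | empty => simp
        | cons a s ih => simp [Multiset.sum_cons, ih, Nat.mul_add]
      have hS2 : S2 = (fun T : Multiset ℕ => T.map (fun x => m * x)) '' A m q := by
        ext S
        constructor
        · rintro hS2mem
          obtain ⟨⟨hpow, hsum⟩, hno1⟩ := hS2mem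
          have hdvdS := hdvd S ⟨⟨hpow, hsum⟩, hno1⟩
          have hSmap : S = (S.map (· / m)).map (fun x => m * x) := by
            rw [Multiset.map_map]
            conv_lhs => rw [← Multiset.map_id S]
            apply Multiset.map_congr rfl
            intro k hk
            exact (Nat.mul_div_cancel' (hdvdS k hk)).symm
          refine ⟨S.map (· / m), ⟨?_, ?_⟩, hSmap.symm⟩
          · intro k hk
            obtain ⟨j, hj, rfl⟩ := Multiset.mem_map.mp hk
            obtain ⟨a, rfl⟩ := hpow j hj
            have ha : 1 ≤ a := by
              rcases Nat.eq_zero_or_pos a with rfl | ha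
              · simp at hj; exact absurd hj hno1
              · omega
            refine ⟨a - 1, ?_⟩
            have : m ^ a = m * m ^ (a - 1) := by
              rw [← pow_succ']; congr 1; omega
            rw [this, Nat.mul_div_cancel_left _ (by omega)]
          · have h1 : ((S.map (· / m)).map (fun x => m * x)).sum = n + 1 := by
              rw [← hSmap]; exact hsum
            rw [hmapsum, hq] at h1
            exact Nat.eq_of_mul_eq_mul_left (by omega) h1
        · rintro ⟨T, ⟨hpow, hsum⟩, rfl⟩
          refine ⟨⟨?_, ?_⟩, ?_⟩
          · intro k hk
            obtain ⟨j, hj, rfl⟩ := Multiset.mem_map.mp hk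
            obtain ⟨a, rfl⟩ := hpow j hj
            exact ⟨a + 1, (pow_succ' m a).symm⟩
          · rw [hmapsum, hsum]; exact hq.symm
          · intro hmem
            obtain ⟨j, hj, hj2⟩ := Multiset.mem_map.mp hmem
            have h1 : m ∣ 1 := ⟨j, hj2.symm⟩
            exact absurd (Nat.le_of_dvd one_pos h1) (by omega)
      rw [hS2, hq2]
      exact Set.ncard_image_of_injective _ (Multiset.map_injective
        (mul_right_injective₀ hm0))
    · rw [if_neg hd]
      have hS2 : S2 = ∅ := by
        ext S
        simp only [Set.mem_empty_iff_false, iff_false]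
        intro hS
        apply hd
        have := hdvd S hS
        have hsum : S.sum = n + 1 := hS.1.2
        rw [← hsum]
        exact Multiset.dvd_sum this
      rw [hS2, Set.ncard_empty]
  rw [hsplit, Set.ncard_union_eq hdisj hfin1 hfin2, hcard1, hcard2]

/-- The `m`-ary partition function: number of multisets of powers of `m` summing to `n`. -/
noncomputable def bary (m n : ℕ) : ℕ :=
  Set.ncard {S : Multiset ℕ | (∀ k ∈ S, ∃ a : ℕ, k = m ^ a) ∧ S.sum = n}

lemma bary_eq (m n : ℕ) : bary m n = (A m n).ncard := rfl

lemma bary_zero (m : ℕ) (hm : 2 ≤ m) : bary m 0 = 1 := A_zero m hm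

lemma bary_rec (m n : ℕ) (hm : 2 ≤ m) :
    bary m (n+1) = bary m n + if m ∣ (n+1) then bary m ((n+1)/m) else 0 := by
  rw [bary_eq, bary_eq, bary_eq, Arec m n hm]

lemma bary_floor (m : ℕ) (hm : 2 ≤ m) :
    ∀ n, bary m n = ∑ i ∈ Finset.range (n / m + 1), bary m i := by
  intro n
  induction n with
  | zero => simp [Nat.zero_div, bary_zero m hm]
  | succ n ih =>
    rw [bary_rec m n hm]
    by_cases hd : m ∣ (n+1)
    · obtain ⟨q, hq⟩ := hd
      have hq1 : 1 ≤ q := by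
        rcases Nat.eq_zero_or_pos q with rfl | h; · omega
        · exact h
      have h1 : (n+1)/m = q := by rw [hq]; exact Nat.mul_div_cancel_left q (by omega)
      have h2 : n/m = q - 1 := by
        obtain ⟨p, rfl⟩ : ∃ p, q = p + 1 := ⟨q-1, by omega⟩
        have hn : n = m * p + (m - 1) := by rw [Nat.mul_succ] at hq; omega
        rw [hn, Nat.mul_add_div (by omega), Nat.div_eq_of_lt (by omega)]
        omega
      rw [if_pos ⟨q, hq⟩, h1, ih, h2]
      have h3 : q - 1 + 1 = q := by omega
      rw [h3, Finset.sum_range_succ]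
    · have h1 : (n+1)/m = n/m := by
        rw [Nat.succ_div, if_neg hd]; omega
      rw [if_neg hd, h1, ih]; omega

/-- summatory function -/
noncomputable def Bf (m t : ℕ) : ℕ := ∑ i ∈ Finset.range (t+1), bary m i

lemma bary_eq_Bf (m : ℕ) (hm : 2 ≤ m) (n : ℕ) : bary m n = Bf m (n/m) :=
  bary_floor m hm n

lemma Bf_succ (m t : ℕ) : Bf m (t+1) = Bf m t + bary m (t+1) :=
  Finset.sum_range_succ _ _

lemma Bf_mono (m : ℕ) : Monotone (Bf m) := by
  intro a b hab
  exact Finset.sum_le_sum_of_subset (Finset.range_subset_range.mpr (by omega))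

lemma Bf_pos (m : ℕ) (hm : 2 ≤ m) (t : ℕ) : 1 ≤ Bf m t := by
  calc 1 = bary m 0 := (bary_zero m hm).symm
  _ ≤ Bf m t := Finset.single_le_sum (f := fun i => bary m i)
      (fun i _ => Nat.zero_le _) (Finset.mem_range.mpr (by omega))

lemma div_le_pred (m k : ℕ) (hm : 2 ≤ m) (hk : 1 ≤ k) : k / m ≤ k - 1 := by
  have h1 : k / m ≤ k / 2 := Nat.div_le_div_left hm (by omega)
  omega

lemma Bf_half (m k : ℕ) (hm : 2 ≤ m) (hk : 1 ≤ k) : 2 * Bf m (k/m) ≤ Bf m k := by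
  obtain ⟨j, rfl⟩ : ∃ j, k = j + 1 := ⟨k - 1, by omega⟩
  rw [Bf_succ, bary_eq_Bf m hm (j+1)]
  have h1 : (j+1)/m ≤ j := by
    have := div_le_pred m (j+1) hm (by omega); omega
  have := Bf_mono m h1
  omega

lemma Bf_doub (m : ℕ) (hm : 2 ≤ m) (s : ℕ) : Bf m (s+1) ≤ 2 * Bf m s := by
  rw [Bf_succ, bary_eq_Bf m hm (s+1)]
  have h1 : (s+1)/m ≤ s := by
    have := div_le_pred m (s+1) hm (by omega); omega
  have := Bf_mono m h1
  omega

lemma Bf_mul (m : ℕ) (hm : 2 ≤ m) (t : ℕ) :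
    Bf m (m*t) = Bf m t + m * ∑ j ∈ Finset.range t, Bf m j := by
  induction t with
  | zero => simp [Bf]
  | succ t ih =>
    have key : Bf m (m*(t+1)) = Bf m (m*t) + (m-1) * Bf m t + Bf m (t+1) := by
      have hmt : m*(t+1) = m*t + m := by ring
      have hsplit : Bf m (m*t + m)
          = Bf m (m*t) + ∑ i ∈ Finset.Ico (m*t+1) (m*t+m+1), bary m i := by
        rw [Bf, Bf, Finset.range_eq_Ico, Finset.range_eq_Ico]
        exact (Finset.sum_Ico_consecutive (fun i => bary m i) (m := 0) (n := m*t+1) (k := m*t+m+1) (by omega) (by omega)).symm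
      have htop : ∑ i ∈ Finset.Ico (m*t+1) (m*t+m+1), bary m i
          = (∑ i ∈ Finset.Ico (m*t+1) (m*t+m), bary m i) + bary m (m*t+m) := by
        rw [Finset.sum_Ico_succ_top (by omega)]
      have hconst : ∑ i ∈ Finset.Ico (m*t+1) (m*t+m), bary m i = (m-1) * Bf m t := by
        rw [Finset.sum_congr rfl (fun i hi => ?_), Finset.sum_const, Nat.card_Ico]
        · rw [smul_eq_mul]; congr 1; omega
        · rw [bary_eq_Bf m hm i]
          congr 1
          rw [Finset.mem_Ico] at hi
          have h1 : t * m ≤ i := by rw [mul_comm]; omega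
          have h2 : i < (t+1) * m := by
            have he : (t+1)*m = m*t+m := by ring
            omega
          exact Nat.div_eq_of_lt_le h1 h2
      have hlast : bary m (m*t+m) = Bf m (t+1) := by
        rw [bary_eq_Bf m hm]
        congr 1
        have he : m*t+m = m*(t+1) := by ring
        rw [he, Nat.mul_div_cancel_left _ (by omega)]
      rw [hmt, hsplit, htop, hconst, hlast]
      ring
    rw [key, ih, Finset.sum_range_succ]
    obtain ⟨k, rfl⟩ : ∃ k, m = k + 2 := ⟨m - 2, by omega⟩
    have hsub : k + 2 - 1 = k + 1 := rfl
    rw [hsub]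
    ring

/-- the eventual-lower-bound property -/
def P (m : ℕ) (c : ℝ) : Prop := ∃ N : ℕ, ∀ n : ℕ, N ≤ n → c * (Bf m (n/m) : ℝ) ≤ (Bf m n : ℝ)

lemma P_base (m : ℕ) (hm : 2 ≤ m) : P m 2 := by
  refine ⟨1, fun n hn => ?_⟩
  have := Bf_half m n hm hn
  have := (Nat.cast_le (α := ℝ)).mpr this
  push_cast at this
  linarith

lemma P_mono (m : ℕ) (c c' : ℝ) (hc' : 0 ≤ c') (h : c' ≤ c) : P m c → P m c' := by
  rintro ⟨N, hN⟩
  refine ⟨N, fun n hn => ?_⟩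
  have h1 := hN n hn
  have h2 : (0:ℝ) ≤ (Bf m (n/m) : ℝ) := Nat.cast_nonneg _
  nlinarith

lemma P_step (m : ℕ) (hm : 2 ≤ m) (c : ℝ) (hc : 2 ≤ c) (hP : P m c) : P m (c + 1/2) := by
  obtain ⟨N, hN⟩ := hP
  set N' := max N 1 with hN'def
  have hc0 : (0:ℝ) < c := by linarith
  set x : ℝ := (c - 1) / c with hxdef
  have hx0 : 0 ≤ x := div_nonneg (by linarith) (le_of_lt hc0)
  have hx1 : x < 1 := by
    rw [hxdef, div_lt_one hc0]; linarith
  have hxc : x * c = c - 1 := div_mul_cancel₀ _ (ne_of_gt hc0)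
  -- Step A
  have stepA : ∀ k : ℕ, N' ≤ k → x * (Bf m k : ℝ) ≤ (Bf m (k-1) : ℝ) := by
    intro k hk
    have hk1 : 1 ≤ k := le_trans (le_max_right N 1) hk
    have hBk : Bf m k = Bf m (k-1) + Bf m (k/m) := by
      conv_lhs => rw [show k = (k-1)+1 by omega]
      rw [Bf_succ, ← bary_eq_Bf m hm]
      congr 2
      omega
    have hNk := hN k (le_trans (le_max_left N 1) hk)
    have hcast : (Bf m k : ℝ) = (Bf m (k-1) : ℝ) + (Bf m (k/m) : ℝ) := by
      rw [hBk]; push_cast; ring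
    have h2 : (0:ℝ) ≤ (Bf m (k/m) : ℝ) := Nat.cast_nonneg _
    rw [hxdef, div_mul_eq_mul_div, div_le_iff₀ hc0]
    nlinarith
  -- Step B
  have stepB : ∀ d t : ℕ, N' + d ≤ t → x^d * (Bf m t : ℝ) ≤ (Bf m (t-d) : ℝ) := by
    intro d
    induction d with
    | zero => intro t _; simp
    | succ d ih =>
      intro t ht
      have h1 := ih (t-1) (by omega)
      have h2 := stepA t (by omega)
      have h3 : t - 1 - d = t - (d+1) := by omega
      rw [h3] at h1
      calc x^(d+1) * (Bf m t : ℝ) = x^d * (x * (Bf m t : ℝ)) := by ring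
      _ ≤ x^d * (Bf m (t-1) : ℝ) := by
          exact mul_le_mul_of_nonneg_left h2 (pow_nonneg hx0 d)
      _ ≤ (Bf m (t - (d+1)) : ℝ) := h1
  -- choose K
  obtain ⟨K, hK⟩ := exists_pow_lt_of_lt_one (show (0:ℝ) < 1/4 by norm_num) hx1
  -- sum bound
  have sumstep : ∀ t : ℕ, N' + K ≤ t →
      (∑ d ∈ Finset.range K, x^(d+1)) * (Bf m t : ℝ) ≤ ∑ j ∈ Finset.range t, (Bf m j : ℝ) := by
    intro t ht
    have h1 : (∑ d ∈ Finset.range K, x^(d+1)) * (Bf m t : ℝ)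
        = ∑ d ∈ Finset.range K, x^(d+1) * (Bf m t : ℝ) := by
      rw [Finset.sum_mul]
    rw [h1]
    calc ∑ d ∈ Finset.range K, x^(d+1) * (Bf m t : ℝ)
        ≤ ∑ d ∈ Finset.range K, (Bf m (t - (d+1)) : ℝ) := by
          apply Finset.sum_le_sum
          intro d hd
          rw [Finset.mem_range] at hd
          exact stepB (d+1) t (by omega)
      _ ≤ ∑ j ∈ Finset.range t, (Bf m j : ℝ) := by
          have hnat : ∑ d ∈ Finset.range K, Bf m (t - (d+1)) ≤ ∑ j ∈ Finset.range t, Bf m j := by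
            have hinj : ∀ p ∈ Finset.range K, ∀ q ∈ Finset.range K,
                t - (p+1) = t - (q+1) → p = q := by
              intro p hp q hq hpq
              rw [Finset.mem_range] at hp hq
              omega
            rw [← Finset.sum_image hinj]
            apply Finset.sum_le_sum_of_subset
            intro j hj
            rw [Finset.mem_image] at hj
            obtain ⟨d, hd, rfl⟩ := hj
            rw [Finset.mem_range] at hd ⊢
            omega
          have := (Nat.cast_le (α := ℝ)).mpr hnat
          push_cast at this
          exact this
  -- geometric sum lower bound
  have hgeom : (3/4 : ℝ) * (c - 1) ≤ ∑ d ∈ Finset.range K, x^(d+1) := by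
    have hxne : x ≠ 1 := ne_of_lt hx1
    have h1 : ∑ d ∈ Finset.range K, x^(d+1) = x * ∑ d ∈ Finset.range K, x^d := by
      rw [Finset.mul_sum]
      apply Finset.sum_congr rfl
      intro d _
      rw [pow_succ']
    have h2 : ∑ d ∈ Finset.range K, x^d = (1 - x^K)/(1-x) := by
      rw [geom_sum_eq hxne]
      rw [← neg_div_neg_eq]
      ring_nf
    have h1x : 1 - x = 1/c := by
      rw [hxdef]
      field_simp
      ring
    rw [h1, h2, h1x]
    rw [div_div_eq_mul_div, div_one, ← mul_assoc]
    have h3 : x * (1 - x^K) ≥ x * (3/4) := by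
      apply mul_le_mul_of_nonneg_left _ hx0
      linarith
    calc (3/4 : ℝ) * (c - 1) = x * (3/4) * c := by rw [mul_comm x (3/4), mul_assoc, hxc]
    _ ≤ x * (1 - x^K) * c := by
        apply mul_le_mul_of_nonneg_right h3 (le_of_lt hc0)
  -- assemble
  refine ⟨m * (N' + K + 1), fun n hn => ?_⟩
  set t := n / m with htdef
  have hmpos : 0 < m := by omega
  have ht : N' + K ≤ t := by
    rw [htdef, Nat.le_div_iff_mul_le hmpos]
    calc (N' + K) * m ≤ (N' + K + 1) * m := by nlinarith
    _ = m * (N' + K + 1) := by ring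
    _ ≤ n := hn
  have hmt : m * t ≤ n := by
    rw [htdef, mul_comm]
    exact Nat.div_mul_le_self n m
  have hmono : (Bf m (m*t) : ℝ) ≤ (Bf m n : ℝ) := by
    exact_mod_cast Nat.cast_le.mpr (Bf_mono m hmt)
  have hmul : (Bf m (m*t) : ℝ) = (Bf m t : ℝ) + (m : ℝ) * ∑ j ∈ Finset.range t, (Bf m j : ℝ) := by
    rw [Bf_mul m hm t]
    push_cast
    ring
  have hsum := sumstep t ht
  have hBt0 : (0:ℝ) ≤ (Bf m t : ℝ) := Nat.cast_nonneg _
  have hm2 : (2:ℝ) ≤ (m:ℝ) := by exact_mod_cast hm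
  have hsge : (0:ℝ) ≤ (3/4 : ℝ) * (c - 1) := by nlinarith
  have key : (c + 1/2) * (Bf m t : ℝ) ≤ (Bf m n : ℝ) := by
    have h5 : (3/4 : ℝ) * (c-1) * (Bf m t : ℝ) ≤ ∑ j ∈ Finset.range t, (Bf m j : ℝ) := by
      calc (3/4 : ℝ) * (c-1) * (Bf m t : ℝ)
          ≤ (∑ d ∈ Finset.range K, x^(d+1)) * (Bf m t : ℝ) :=
            mul_le_mul_of_nonneg_right hgeom hBt0
        _ ≤ _ := hsum
    have h6 : (m:ℝ) * ((3/4 : ℝ) * (c-1) * (Bf m t : ℝ))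
        ≤ (m:ℝ) * ∑ j ∈ Finset.range t, (Bf m j : ℝ) :=
      mul_le_mul_of_nonneg_left h5 (by linarith)
    have h7 : (c + 1/2) * (Bf m t : ℝ) ≤ (Bf m t : ℝ) + (m:ℝ) * ((3/4 : ℝ) * (c-1) * (Bf m t : ℝ)) := by
      nlinarith [mul_nonneg (by linarith : (0:ℝ) ≤ (m:ℝ) - 2) (mul_nonneg hsge hBt0),
        mul_nonneg (by linarith : (0:ℝ) ≤ c - 2) hBt0]
    linarith [hmono, hmul.symm.le, hmul.le]
  -- finally relate Bf m (n/m) to Bf m t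
  exact key

lemma P_all (m : ℕ) (hm : 2 ≤ m) : ∀ k : ℕ, P m (2 + k/2) := by
  intro k
  induction k with
  | zero => simpa using P_base m hm
  | succ k ih =>
    have h1 := P_step m hm (2 + k/2) (by
      have h0 : (0:ℝ) ≤ (k:ℝ)/2 := by positivity
      linarith) ih
    have h2 : (2 + (k:ℝ)/2) + 1/2 = 2 + ((k:ℕ)+1 : ℝ)/2 := by ring
    rw [h2] at h1
    convert h1 using 2
    push_cast
    ring

lemma rho_small (m : ℕ) (hm : 2 ≤ m) (ε : ℝ) (hε : 0 < ε) :
    ∃ N : ℕ, ∀ n : ℕ, N ≤ n → (Bf m (n/m) : ℝ) ≤ ε * (Bf m n : ℝ) := by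
  obtain ⟨k, hk⟩ := exists_nat_ge (2/ε)
  set c : ℝ := 2 + k/2 with hcdef
  have hc : 1/ε ≤ c := by
    rw [hcdef]
    have : 2/ε ≤ (k:ℝ) := hk
    have h2 : 1/ε ≤ (k:ℝ)/2 := by
      rw [div_le_div_iff₀ hε (by norm_num)]
      calc 1 * 2 = 2/ε * ε := by field_simp
      _ ≤ (k:ℝ) * ε := by nlinarith
    linarith
  obtain ⟨N, hN⟩ := P_all m hm k
  refine ⟨N, fun n hn => ?_⟩
  have h1 := hN n hn
  have hB1 : (0:ℝ) ≤ (Bf m (n/m) : ℝ) := Nat.cast_nonneg _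
  have hεc : 1 ≤ ε * c := by
    calc (1:ℝ) = ε * (1/ε) := by field_simp
    _ ≤ ε * c := mul_le_mul_of_nonneg_left hc (le_of_lt hε)
  calc (Bf m (n/m) : ℝ) = 1 * (Bf m (n/m) : ℝ) := by ring
  _ ≤ (ε * c) * (Bf m (n/m) : ℝ) := mul_le_mul_of_nonneg_right hεc hB1
  _ = ε * (c * (Bf m (n/m) : ℝ)) := by ring
  _ ≤ ε * (Bf m n : ℝ) := mul_le_mul_of_nonneg_left h1 (le_of_lt hε)

theorem stmt15 (m : ℕ) (hm : 2 ≤ m) :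
    Filter.Tendsto (fun n : ℕ => (bary m (n + 1) : ℝ) / (bary m n))
      Filter.atTop (nhds 1) := by
  rw [Metric.tendsto_atTop]
  intro ε hε
  obtain ⟨N, hρ⟩ := rho_small m hm (ε/4) (by linarith)
  have hmpos : 0 < m := by omega
  refine ⟨m * (N + 1), fun n hn => ?_⟩
  set t := n / m with htdef
  have ht : N ≤ t := by
    rw [htdef, Nat.le_div_iff_mul_le hmpos]
    calc N * m ≤ (N+1) * m := by nlinarith
    _ = m * (N+1) := by ring
    _ ≤ n := hn
  have hbn : bary m n = Bf m t := bary_eq_Bf m hm n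
  have hbn1 : bary m (n+1) = Bf m ((n+1)/m) := bary_eq_Bf m hm (n+1)
  -- lower bound
  have hlow : Bf m t ≤ bary m (n+1) := by
    rw [hbn1]
    exact Bf_mono m (Nat.div_le_div_right (by omega))
  -- upper bound (ℕ)
  have hup : bary m (n+1) ≤ Bf m t + 2 * Bf m (t/m) := by
    rw [hbn1]
    have h1 : (n+1)/m ≤ t + 1 := by
      calc (n+1)/m ≤ (n+m)/m := Nat.div_le_div_right (by omega)
      _ = n/m + 1 := Nat.add_div_right n hmpos
    calc Bf m ((n+1)/m) ≤ Bf m (t+1) := Bf_mono m h1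
    _ = Bf m t + bary m (t+1) := Bf_succ m t
    _ = Bf m t + Bf m ((t+1)/m) := by rw [bary_eq_Bf m hm (t+1)]
    _ ≤ Bf m t + Bf m (t/m + 1) := by
        have : (t+1)/m ≤ t/m + 1 := by
          calc (t+1)/m ≤ (t+m)/m := Nat.div_le_div_right (by omega)
          _ = t/m + 1 := Nat.add_div_right t hmpos
        have := Bf_mono m this
        omega
    _ ≤ Bf m t + 2 * Bf m (t/m) := by
        have := Bf_doub m hm (t/m)
        omega
  -- real versions
  have hBt1 : (1:ℝ) ≤ (Bf m t : ℝ) := by exact_mod_cast Bf_pos m hm t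
  have hBt0 : (0:ℝ) < (Bf m t : ℝ) := by linarith
  have hρt : (Bf m (t/m) : ℝ) ≤ (ε/4) * (Bf m t : ℝ) := hρ t ht
  have hupR : (bary m (n+1) : ℝ) ≤ (1 + ε/2) * (Bf m t : ℝ) := by
    have h2 : (bary m (n+1) : ℝ) ≤ (Bf m t : ℝ) + 2 * (Bf m (t/m) : ℝ) := by
      exact_mod_cast Nat.cast_le.mpr hup
    linarith
  have hlowR : (Bf m t : ℝ) ≤ (bary m (n+1) : ℝ) := by exact_mod_cast Nat.cast_le.mpr hlow
  have hbnR : (bary m n : ℝ) = (Bf m t : ℝ) := by rw [hbn]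
  rw [Real.dist_eq, hbnR]
  have hr1 : 1 ≤ (bary m (n+1) : ℝ) / (Bf m t : ℝ) := by
    rw [le_div_iff₀ hBt0]; linarith
  have hr2 : (bary m (n+1) : ℝ) / (Bf m t : ℝ) ≤ 1 + ε/2 := by
    rw [div_le_iff₀ hBt0]; linarith
  rw [abs_of_nonneg (by linarith)]
  linarith
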